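/- (Stability of PA-III.) Let u⁰ ∈ ℝ^m and let (U_n^k)_{n,k≥0} be a family of vectors in ℝ^m satisfying U_0^k = u⁰ for all k and the Parareal recurrence U_{n+1}^{k+1} = P_1·U_n^{k+1} + (P_{J_2} − P_1)·U_n^k for all n, k ≥ 0 (coarse propagator P_1, fine propagator P_{J_2}). Then for every n and k, ‖U_{n+1}^{k+1}‖ ≤ ‖u⁰‖ + (n+1)·max_{0≤j≤n} ‖U_j^k‖. -/

import Mathlib

/-- The m×m discrete Dirichlet Laplacian with mesh size `h`. -/
noncomputable def Dh (m : ℕ) (h : ℝ) : Matrix (Fin m) (Fin m) ℝ :=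
  Matrix.of fun i j =>
    if (i : ℕ) = (j : ℕ) then 1 / h ^ 2 * (-2)
    else if (i : ℕ) + 1 = (j : ℕ) ∨ (j : ℕ) + 1 = (i : ℕ) then 1 / h ^ 2 * 1
    else 0

/-- `Pmat m h ΔT ε i = (I − iΔT·D_h + ε²ΔT·D_h²)⁻¹ (I − iΔT·D_h)`. -/
noncomputable def Pmat (m : ℕ) (h ΔT ε : ℝ) (i : ℕ) : Matrix (Fin m) (Fin m) ℝ :=
  ((1 : Matrix (Fin m) (Fin m) ℝ) - ((i : ℝ) * ΔT) • Dh m h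
      + (ε ^ 2 * ΔT) • Dh m h ^ 2)⁻¹
    * ((1 : Matrix (Fin m) (Fin m) ℝ) - ((i : ℝ) * ΔT) • Dh m h)

/-- `PJmat m h ΔT ε J i = [(I − (iΔT/J)·D_h + ε²(ΔT/J)·D_h²)⁻¹ (I − (iΔT/J)·D_h)]^J`. -/
noncomputable def PJmat (m : ℕ) (h ΔT ε : ℝ) (J i : ℕ) : Matrix (Fin m) (Fin m) ℝ :=
  (((1 : Matrix (Fin m) (Fin m) ℝ) - ((i : ℝ) * ΔT / (J : ℝ)) • Dh m h
      + (ε ^ 2 * (ΔT / (J : ℝ))) • Dh m h ^ 2)⁻¹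
    * ((1 : Matrix (Fin m) (Fin m) ℝ) - ((i : ℝ) * ΔT / (J : ℝ)) • Dh m h)) ^ J

/-- The action of a matrix on `EuclideanSpace ℝ (Fin m)` (i.e. `ℝ^m` with the
Euclidean norm), given by matrix-vector multiplication. -/
noncomputable def act {m : ℕ} (A : Matrix (Fin m) (Fin m) ℝ)
    (U : EuclideanSpace ℝ (Fin m)) : EuclideanSpace ℝ (Fin m) :=
  Matrix.toEuclideanCLM (𝕜 := ℝ) A U

/-- The operator (spectral) norm of a matrix, induced by the Euclidean norm. -/
noncomputable def opNorm {m : ℕ} (A : Matrix (Fin m) (Fin m) ℝ) : ℝ :=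
  ‖Matrix.toEuclideanCLM (𝕜 := ℝ) A‖

open Matrix

/-! ### Auxiliary lemmas -/

lemma aux_sum_ite_coe {m : ℕ} (y : Fin m → ℝ) (t : ℕ) :
    (∑ j : Fin m, if t = (j : ℕ) then y j else 0) =
      if ht : t < m then y ⟨t, ht⟩ else 0 := by
  split_ifs with ht
  · rw [Finset.sum_eq_single ⟨t, ht⟩]
    · simp
    · intro j _ hj
      exact if_neg fun hc => hj (Fin.ext hc.symm)
    · simp
  · refine Finset.sum_eq_zero fun j _ => if_neg fun hj => ?_
    have := j.isLt; rw [← hj] at this; exact ht this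

lemma Dh_quad {m : ℕ} (h : ℝ) (x : Fin m → ℝ) :
    x ⬝ᵥ (Dh m h) *ᵥ x ≤ 0 := by
  classical
  set c : ℝ := 1 / h ^ 2 with hc
  have hc0 : 0 ≤ c := by positivity
  set a : Fin m → ℝ := fun i => if hi : (i : ℕ) + 1 < m then x ⟨(i : ℕ) + 1, hi⟩ else 0 with ha
  have hSB : ∀ i : Fin m, (∑ j : Fin m, if (i : ℕ) + 1 = (j : ℕ) then x i * x j else 0)
      = x i * a i := by
    intro i
    rw [aux_sum_ite_coe (fun j => x i * x j) ((i : ℕ) + 1)]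
    simp only [ha]
    by_cases hi : (i : ℕ) + 1 < m
    · rw [dif_pos hi, dif_pos hi]
    · rw [dif_neg hi, dif_neg hi, mul_zero]
  have key : x ⬝ᵥ (Dh m h) *ᵥ x
      = c * ((-2) * ∑ i, x i ^ 2 + 2 * ∑ i, x i * a i) := by
    have expand : x ⬝ᵥ (Dh m h) *ᵥ x = ∑ i, ∑ j, x i * (Dh m h i j * x j) := by
      simp [dotProduct, Matrix.mulVec, Finset.mul_sum]
    rw [expand]
    have entry : ∀ i j : Fin m, x i * (Dh m h i j * x j) =
        c * ((if (i : ℕ) = (j : ℕ) then (-2) * (x i * x j) else 0)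
          + ((if (i : ℕ) + 1 = (j : ℕ) then x i * x j else 0)
          + (if (j : ℕ) + 1 = (i : ℕ) then x i * x j else 0))) := by
      intro i j
      simp only [Dh, Matrix.of_apply]
      split_ifs <;> first | (exfalso; omega) | ring
    simp_rw [entry, ← Finset.mul_sum]
    congr 1
    simp_rw [Finset.sum_add_distrib]
    have hA : (∑ i : Fin m, ∑ j : Fin m, if (i : ℕ) = (j : ℕ) then (-2) * (x i * x j) else 0)
        = (-2) * ∑ i, x i ^ 2 := by
      rw [Finset.mul_sum]
      refine Finset.sum_congr rfl fun i _ => ?_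
      rw [aux_sum_ite_coe (fun j => (-2) * (x i * x j)) (i : ℕ), dif_pos i.isLt]
      simp [pow_two]
    have hC : (∑ i : Fin m, ∑ j : Fin m, if (j : ℕ) + 1 = (i : ℕ) then x i * x j else 0)
        = ∑ i, x i * a i := by
      rw [Finset.sum_comm]
      refine Finset.sum_congr rfl fun i _ => ?_
      rw [← hSB i]
      refine Finset.sum_congr rfl fun j _ => ?_
      rcases eq_or_ne ((i : ℕ) + 1) (j : ℕ) with hij | hij
      · rw [if_pos hij, if_pos hij, mul_comm]
      · rw [if_neg hij, if_neg hij]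
    simp_rw [hSB]
    rw [hA, hC]
    ring
  rw [key]
  have haux : ∑ i, x i * a i ≤ ∑ i, x i ^ 2 := by
    have h1 : ∀ i : Fin m, x i * a i ≤ (x i ^ 2 + a i ^ 2) / 2 := by
      intro i; nlinarith [sq_nonneg (x i - a i)]
    have h2 : ∑ i, a i ^ 2 ≤ ∑ i, x i ^ 2 := by
      have e1 : ∀ i : Fin m, a i ^ 2
          = ∑ j : Fin m, if (i : ℕ) + 1 = (j : ℕ) then x j ^ 2 else 0 := by
        intro i
        rw [aux_sum_ite_coe (fun j => x j ^ 2) ((i : ℕ) + 1)]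
        simp only [ha]
        by_cases hi : (i : ℕ) + 1 < m
        · rw [dif_pos hi, dif_pos hi]
        · rw [dif_neg hi, dif_neg hi, zero_pow two_ne_zero]
      simp_rw [e1]
      rw [Finset.sum_comm]
      refine Finset.sum_le_sum fun j _ => ?_
      calc (∑ i : Fin m, if (i : ℕ) + 1 = (j : ℕ) then x j ^ 2 else 0)
          = (Finset.univ.filter fun i : Fin m => (i : ℕ) + 1 = (j : ℕ)).card • x j ^ 2 := by
            rw [Finset.sum_ite, Finset.sum_const, Finset.sum_const_zero, add_zero]
        _ ≤ x j ^ 2 := by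
            have hcard : (Finset.univ.filter fun i : Fin m => (i : ℕ) + 1 = (j : ℕ)).card ≤ 1 := by
              refine Finset.card_le_one.mpr fun i₁ h₁ i₂ h₂ => ?_
              simp only [Finset.mem_filter] at h₁ h₂
              exact Fin.ext (by omega)
            interval_cases hcc : (Finset.univ.filter fun i : Fin m => (i : ℕ) + 1 = (j : ℕ)).card <;>
              simp [sq_nonneg]
    calc ∑ i, x i * a i ≤ ∑ i, (x i ^ 2 + a i ^ 2) / 2 := Finset.sum_le_sum fun i _ => h1 i
      _ ≤ ∑ i, x i ^ 2 := by
          rw [← Finset.sum_div, Finset.sum_add_distrib]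
          linarith
  nlinarith [Finset.sum_nonneg (fun i (_ : i ∈ Finset.univ) => sq_nonneg (x i))]

lemma Dh_isHermitian (m : ℕ) (h : ℝ) : (Dh m h).IsHermitian := by
  ext i j
  simp only [Dh, Matrix.conjTranspose_apply, Matrix.of_apply, star_trivial]
  split_ifs <;> first | rfl | omega

lemma Dh_eigenvalues_nonpos (m : ℕ) (h : ℝ) (i : Fin m) :
    (Dh_isHermitian m h).eigenvalues i ≤ 0 := by
  rw [Matrix.IsHermitian.eigenvalues_eq]
  simpa using Dh_quad h _

/-! ### Functional calculus via the eigenvector unitary -/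

noncomputable def Vm (m : ℕ) (h : ℝ) : Matrix (Fin m) (Fin m) ℝ :=
  ((Dh_isHermitian m h).eigenvectorUnitary : Matrix (Fin m) (Fin m) ℝ)

lemma Vm_star_mul (m : ℕ) (h : ℝ) : star (Vm m h) * Vm m h = 1 :=
  Matrix.mem_unitaryGroup_iff'.mp (Dh_isHermitian m h).eigenvectorUnitary.2

lemma Vm_mul_star (m : ℕ) (h : ℝ) : Vm m h * star (Vm m h) = 1 :=
  Matrix.mem_unitaryGroup_iff.mp (Dh_isHermitian m h).eigenvectorUnitary.2

noncomputable def Phi (m : ℕ) (h : ℝ) (d : Fin m → ℝ) : Matrix (Fin m) (Fin m) ℝ :=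
  Vm m h * Matrix.diagonal d * star (Vm m h)

lemma Dh_eq_Phi (m : ℕ) (h : ℝ) :
    Dh m h = Phi m h ((Dh_isHermitian m h).eigenvalues) := by
  have := (Dh_isHermitian m h).spectral_theorem
  simpa [Phi, Vm, Function.comp] using this

lemma Phi_mul (m : ℕ) (h : ℝ) (d e : Fin m → ℝ) :
    Phi m h d * Phi m h e = Phi m h (fun i => d i * e i) := by
  unfold Phi
  have : Matrix.diagonal d * star (Vm m h) * (Vm m h * Matrix.diagonal e)
      = Matrix.diagonal (fun i => d i * e i) := by
    rw [Matrix.mul_assoc, ← Matrix.mul_assoc (star (Vm m h)), Vm_star_mul, Matrix.one_mul,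
      Matrix.diagonal_mul_diagonal]
  calc Vm m h * Matrix.diagonal d * star (Vm m h) * (Vm m h * Matrix.diagonal e * star (Vm m h))
      = Vm m h * (Matrix.diagonal d * star (Vm m h) * (Vm m h * Matrix.diagonal e)) * star (Vm m h) := by
        simp only [Matrix.mul_assoc]
    _ = Vm m h * Matrix.diagonal (fun i => d i * e i) * star (Vm m h) := by rw [this, Matrix.mul_assoc]

lemma Phi_one (m : ℕ) (h : ℝ) : Phi m h (fun _ => 1) = 1 := by
  unfold Phi
  rw [show (Matrix.diagonal (fun _ : Fin m => (1:ℝ))) = 1 from Matrix.diagonal_one,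
    Matrix.mul_one, Vm_mul_star]

lemma Phi_add (m : ℕ) (h : ℝ) (d e : Fin m → ℝ) :
    Phi m h d + Phi m h e = Phi m h (fun i => d i + e i) := by
  unfold Phi
  rw [← Matrix.add_mul, ← Matrix.mul_add, Matrix.diagonal_add]

lemma Phi_sub (m : ℕ) (h : ℝ) (d e : Fin m → ℝ) :
    Phi m h d - Phi m h e = Phi m h (fun i => d i - e i) := by
  unfold Phi
  rw [← Matrix.sub_mul, ← Matrix.mul_sub, Matrix.diagonal_sub]

lemma Phi_smul (m : ℕ) (h : ℝ) (c : ℝ) (d : Fin m → ℝ) :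
    c • Phi m h d = Phi m h (fun i => c * d i) := by
  unfold Phi
  have hdiag : Matrix.diagonal (fun i => c * d i) = c • Matrix.diagonal d := by
    rw [← Matrix.diagonal_smul]
    rfl
  rw [hdiag, Matrix.mul_smul, Matrix.smul_mul]

lemma Phi_pow (m : ℕ) (h : ℝ) (d : Fin m → ℝ) (k : ℕ) :
    Phi m h d ^ k = Phi m h (fun i => d i ^ k) := by
  induction k with
  | zero => simpa using (Phi_one m h).symm
  | succ k ih =>
      rw [pow_succ, ih, Phi_mul]
      simp [pow_succ]

lemma Phi_inv (m : ℕ) (h : ℝ) (d : Fin m → ℝ) (hd : ∀ i, d i ≠ 0) :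
    (Phi m h d)⁻¹ = Phi m h (fun i => (d i)⁻¹) := by
  apply Matrix.inv_eq_left_inv
  rw [Phi_mul]
  have : (fun i => (d i)⁻¹ * d i) = fun _ => (1:ℝ) := by
    funext i; exact inv_mul_cancel₀ (hd i)
  rw [this, Phi_one]

/-- The basic resolvent-type expression as a function of the eigenvalues. -/
lemma resolvent_eq_Phi (m : ℕ) (h : ℝ) (c d : ℝ) (hc : 0 ≤ c) (hd : 0 ≤ d) :
    ((1 : Matrix (Fin m) (Fin m) ℝ) - c • Dh m h + d • Dh m h ^ 2)⁻¹
        * ((1 : Matrix (Fin m) (Fin m) ℝ) - c • Dh m h)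
      = Phi m h (fun i => (1 - c * (Dh_isHermitian m h).eigenvalues i)
          / (1 - c * (Dh_isHermitian m h).eigenvalues i
            + d * (Dh_isHermitian m h).eigenvalues i ^ 2)) := by
  set μ := (Dh_isHermitian m h).eigenvalues with hμdef
  have hμ : ∀ i, μ i ≤ 0 := Dh_eigenvalues_nonpos m h
  have hnum : ∀ i, (1:ℝ) ≤ 1 - c * μ i := fun i => by nlinarith [hμ i]
  have hden : ∀ i, (1:ℝ) ≤ 1 - c * μ i + d * μ i ^ 2 := fun i => by
    nlinarith [hμ i, sq_nonneg (μ i)]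
  have hN : (1 : Matrix (Fin m) (Fin m) ℝ) - c • Dh m h
      = Phi m h (fun i => 1 - c * μ i) := by
    rw [Dh_eq_Phi m h, Phi_smul, ← Phi_one m h, Phi_sub]
  have hS : (1 : Matrix (Fin m) (Fin m) ℝ) - c • Dh m h + d • Dh m h ^ 2
      = Phi m h (fun i => 1 - c * μ i + d * μ i ^ 2) := by
    rw [hN, Dh_eq_Phi m h, Phi_pow, Phi_smul, Phi_add]
  rw [hS, hN, Phi_inv m h _ (fun i => by have := hden i; positivity), Phi_mul]
  have : (fun i => (1 - c * μ i + d * μ i ^ 2)⁻¹ * (1 - c * μ i))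
      = fun i => (1 - c * μ i) / (1 - c * μ i + d * μ i ^ 2) := by
    funext i; rw [div_eq_inv_mul]
  rw [this]

lemma Pmat_eq_Phi (m : ℕ) (h ΔT ε : ℝ) (hΔT : 0 ≤ ΔT) (i : ℕ) :
    Pmat m h ΔT ε i = Phi m h (fun k => (1 - ((i:ℝ) * ΔT) * (Dh_isHermitian m h).eigenvalues k)
      / (1 - ((i:ℝ) * ΔT) * (Dh_isHermitian m h).eigenvalues k
        + (ε ^ 2 * ΔT) * (Dh_isHermitian m h).eigenvalues k ^ 2)) := by
  exact resolvent_eq_Phi m h ((i:ℝ) * ΔT) (ε ^ 2 * ΔT)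
    (by positivity) (by positivity)

lemma PJmat_eq_Phi (m : ℕ) (h ΔT ε : ℝ) (hΔT : 0 ≤ ΔT) (J i : ℕ) :
    PJmat m h ΔT ε J i = Phi m h (fun k =>
      ((1 - ((i:ℝ) * ΔT / (J:ℝ)) * (Dh_isHermitian m h).eigenvalues k)
      / (1 - ((i:ℝ) * ΔT / (J:ℝ)) * (Dh_isHermitian m h).eigenvalues k
        + (ε ^ 2 * (ΔT / (J:ℝ))) * (Dh_isHermitian m h).eigenvalues k ^ 2)) ^ J) := by
  unfold PJmat
  rw [show ((i:ℝ) * ΔT / (J:ℝ)) = (i:ℝ) * (ΔT / (J:ℝ)) by ring,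
    resolvent_eq_Phi m h ((i:ℝ) * (ΔT / (J:ℝ))) (ε ^ 2 * (ΔT / (J:ℝ)))
      (by positivity) (by positivity), Phi_pow]

/-! ### Norm estimates -/

lemma act_mul {m : ℕ} (A B : Matrix (Fin m) (Fin m) ℝ) (v : EuclideanSpace ℝ (Fin m)) :
    act (A * B) v = act A (act B v) := by
  simp [act, _root_.map_mul]

lemma act_one {m : ℕ} (v : EuclideanSpace ℝ (Fin m)) :
    act (1 : Matrix (Fin m) (Fin m) ℝ) v = v := by
  simp [act]

lemma norm_act_unitary {m : ℕ} (V : Matrix (Fin m) (Fin m) ℝ)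
    (hV : star V * V = 1) (w : EuclideanSpace ℝ (Fin m)) : ‖act V w‖ = ‖w‖ := by
  have h1 : act (star V) (act V w) = w := by
    rw [← act_mul, hV, act_one]
  have h2 : (Matrix.toEuclideanCLM (𝕜 := ℝ) (star V)) =
      ContinuousLinearMap.adjoint (Matrix.toEuclideanCLM (𝕜 := ℝ) V) := by
    rw [map_star, ContinuousLinearMap.star_eq_adjoint]
  have h3 : (inner ℝ (act V w) (act V w) : ℝ) = inner ℝ w w := by
    calc (inner ℝ (act V w) (act V w) : ℝ)
        = inner ℝ (act (star V) (act V w)) w := by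
          rw [act, act, h2, ContinuousLinearMap.adjoint_inner_left]
      _ = inner ℝ w w := by rw [h1]
  rw [norm_eq_sqrt_real_inner, norm_eq_sqrt_real_inner, h3]

lemma norm_act_diagonal {m : ℕ} (d : Fin m → ℝ) {C : ℝ} (hC : 0 ≤ C)
    (hd : ∀ i, |d i| ≤ C) (w : EuclideanSpace ℝ (Fin m)) :
    ‖act (Matrix.diagonal d) w‖ ≤ C * ‖w‖ := by
  have happ : ∀ i, act (Matrix.diagonal d) w i = d i * w i := by
    intro i
    have := Matrix.ofLp_toEuclideanCLM (𝕜 := ℝ) (Matrix.diagonal d) w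
    have := congrFun this i
    simpa [Matrix.toLin'_apply, Matrix.mulVec_diagonal, act] using this
  rw [EuclideanSpace.norm_eq, EuclideanSpace.norm_eq]
  rw [show C = Real.sqrt (C ^ 2) by rw [Real.sqrt_sq hC]]
  rw [← Real.sqrt_mul (by positivity)]
  apply Real.sqrt_le_sqrt
  rw [Finset.mul_sum]
  refine Finset.sum_le_sum fun i _ => ?_
  rw [happ i]
  have habs : |d i * w i| ≤ C * |w i| := by
    rw [abs_mul]
    exact mul_le_mul_of_nonneg_right (hd i) (abs_nonneg _)
  calc ‖d i * w i‖ ^ 2 = |d i * w i| ^ 2 := by rw [Real.norm_eq_abs]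
    _ ≤ (C * |w i|) ^ 2 := pow_le_pow_left₀ (abs_nonneg _) habs 2
    _ = C ^ 2 * ‖w i‖ ^ 2 := by rw [Real.norm_eq_abs]; ring

lemma norm_act_Phi {m : ℕ} (h : ℝ) (d : Fin m → ℝ) {C : ℝ} (hC : 0 ≤ C)
    (hd : ∀ i, |d i| ≤ C) (v : EuclideanSpace ℝ (Fin m)) :
    ‖act (Phi m h d) v‖ ≤ C * ‖v‖ := by
  unfold Phi
  rw [act_mul, act_mul, norm_act_unitary (Vm m h) (Vm_star_mul m h)]
  calc ‖act (Matrix.diagonal d) (act (star (Vm m h)) v)‖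
      ≤ C * ‖act (star (Vm m h)) v‖ := norm_act_diagonal d hC hd _
    _ = C * ‖v‖ := by
        rw [norm_act_unitary (star (Vm m h)) (by rw [star_star, Vm_mul_star]) v]

/-- The fraction `(1 - c x)/(1 - c x + d x²)` lies in `(0, 1]` for `x ≤ 0`. -/
lemma frac_mem (c d x : ℝ) (hc : 0 ≤ c) (hd : 0 ≤ d) (hx : x ≤ 0) :
    0 < (1 - c * x) / (1 - c * x + d * x ^ 2)
      ∧ (1 - c * x) / (1 - c * x + d * x ^ 2) ≤ 1 := by
  have h1 : (1:ℝ) ≤ 1 - c * x := by nlinarith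
  have h2 : 1 - c * x ≤ 1 - c * x + d * x ^ 2 := by nlinarith [sq_nonneg x]
  have h3 : (0:ℝ) < 1 - c * x + d * x ^ 2 := by linarith
  exact ⟨div_pos (by linarith) h3, (div_le_one h3).mpr h2⟩

/-- The key contraction estimates. -/
lemma norm_act_Pmat_le (m : ℕ) (h ΔT ε : ℝ) (hΔT : 0 ≤ ΔT)
    (v : EuclideanSpace ℝ (Fin m)) :
    ‖act (Pmat m h ΔT ε 1) v‖ ≤ ‖v‖ := by
  rw [Pmat_eq_Phi m h ΔT ε hΔT 1]
  have hb : ∀ k, |(1 - ((1:ℕ):ℝ) * ΔT * (Dh_isHermitian m h).eigenvalues k)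
      / (1 - ((1:ℕ):ℝ) * ΔT * (Dh_isHermitian m h).eigenvalues k
        + ε ^ 2 * ΔT * (Dh_isHermitian m h).eigenvalues k ^ 2)| ≤ 1 := by
    intro k
    obtain ⟨hp, hle⟩ := frac_mem (((1:ℕ):ℝ) * ΔT) (ε ^ 2 * ΔT)
      ((Dh_isHermitian m h).eigenvalues k)
      (by positivity) (by positivity) (Dh_eigenvalues_nonpos m h k)
    rw [abs_le]
    constructor <;> linarith
  have := norm_act_Phi h _ zero_le_one hb v
  simpa using this

lemma norm_act_diff_le (m : ℕ) (h ΔT ε : ℝ) (hΔT : 0 ≤ ΔT) (J : ℕ)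
    (v : EuclideanSpace ℝ (Fin m)) :
    ‖act (PJmat m h ΔT ε J 2 - Pmat m h ΔT ε 1) v‖ ≤ ‖v‖ := by
  rw [Pmat_eq_Phi m h ΔT ε hΔT 1, PJmat_eq_Phi m h ΔT ε hΔT J 2, Phi_sub]
  have hb : ∀ k, |((1 - ((2:ℕ):ℝ) * ΔT / (J:ℝ) * (Dh_isHermitian m h).eigenvalues k)
      / (1 - ((2:ℕ):ℝ) * ΔT / (J:ℝ) * (Dh_isHermitian m h).eigenvalues k
        + ε ^ 2 * (ΔT / (J:ℝ)) * (Dh_isHermitian m h).eigenvalues k ^ 2)) ^ J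
      - (1 - ((1:ℕ):ℝ) * ΔT * (Dh_isHermitian m h).eigenvalues k)
      / (1 - ((1:ℕ):ℝ) * ΔT * (Dh_isHermitian m h).eigenvalues k
        + ε ^ 2 * ΔT * (Dh_isHermitian m h).eigenvalues k ^ 2)| ≤ 1 := by
    intro k
    have hx0 := Dh_eigenvalues_nonpos m h k
    obtain ⟨hp1, hle1⟩ := frac_mem (((1:ℕ):ℝ) * ΔT) (ε ^ 2 * ΔT)
      ((Dh_isHermitian m h).eigenvalues k) (by positivity) (by positivity) hx0
    obtain ⟨hp2, hle2⟩ := frac_mem (((2:ℕ):ℝ) * ΔT / (J:ℝ)) (ε ^ 2 * (ΔT / (J:ℝ)))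
      ((Dh_isHermitian m h).eigenvalues k) (by positivity) (by positivity) hx0
    have hpow_pos := pow_pos hp2 J
    have hpow_le := pow_le_one₀ (n := J) (le_of_lt hp2) hle2
    rw [abs_le]
    constructor <;> linarith
  have := norm_act_Phi h _ zero_le_one hb v
  simpa using this

theorem stmt13 (h ΔT ε : ℝ) (hh : 0 < h) (hΔT : 0 < ΔT) (hε : 0 < ε)
    (m : ℕ) (hm : 1 ≤ m) (J : ℕ) (hJ : 2 ≤ J)
    (u0 : EuclideanSpace ℝ (Fin m)) (U : ℕ → ℕ → EuclideanSpace ℝ (Fin m))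
    (h0 : ∀ k, U 0 k = u0)
    (hrec : ∀ n k, U (n + 1) (k + 1) =
      act (Pmat m h ΔT ε 1) (U n (k + 1))
        + act (PJmat m h ΔT ε J 2 - Pmat m h ΔT ε 1) (U n k)) :
    ∀ n k, ‖U (n + 1) (k + 1)‖ ≤ ‖u0‖ +
      ((n : ℝ) + 1) *
        ((Finset.range (n + 1)).sup' (Finset.nonempty_range_iff.mpr n.succ_ne_zero)
          fun j => ‖U j k‖) := by
  have hP : ∀ v : EuclideanSpace ℝ (Fin m), ‖act (Pmat m h ΔT ε 1) v‖ ≤ ‖v‖ :=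
    norm_act_Pmat_le m h ΔT ε hΔT.le
  have hQ : ∀ v : EuclideanSpace ℝ (Fin m),
      ‖act (PJmat m h ΔT ε J 2 - Pmat m h ΔT ε 1) v‖ ≤ ‖v‖ :=
    norm_act_diff_le m h ΔT ε hΔT.le J
  intro n k
  induction n with
  | zero =>
    have hs : ((Finset.range 1).sup' (Finset.nonempty_range_iff.mpr Nat.one_ne_zero)
        fun j => ‖U j k‖) = ‖U 0 k‖ := by
      simp
    rw [hrec 0 k, hs, h0 (k + 1), h0 k]
    have htr := norm_add_le (act (Pmat m h ΔT ε 1) u0)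
      (act (PJmat m h ΔT ε J 2 - Pmat m h ΔT ε 1) u0)
    have h1 := hP u0
    have h2 := hQ u0
    push_cast
    linarith
  | succ n ih =>
    rw [hrec (n + 1) k]
    set Sn := ((Finset.range (n + 1)).sup' (Finset.nonempty_range_iff.mpr n.succ_ne_zero)
      fun j => ‖U j k‖) with hSn
    set Sn1 := ((Finset.range (n + 2)).sup' (Finset.nonempty_range_iff.mpr (n + 1).succ_ne_zero)
      fun j => ‖U j k‖) with hSn1
    have hmono : Sn ≤ Sn1 := by
      refine Finset.sup'_le _ _ fun j hj => ?_
      refine Finset.le_sup' (fun j => ‖U j k‖) ?_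
      rw [Finset.mem_range] at hj ⊢
      omega
    have hlast : ‖U (n + 1) k‖ ≤ Sn1 :=
      Finset.le_sup' (fun j => ‖U j k‖) (Finset.mem_range.mpr (by omega))
    have hS0 : (0:ℝ) ≤ Sn :=
      le_trans (norm_nonneg (U 0 k))
        (Finset.le_sup' (fun j => ‖U j k‖) (Finset.mem_range.mpr (by omega)))
    have htr := norm_add_le (act (Pmat m h ΔT ε 1) (U (n + 1) (k + 1)))
      (act (PJmat m h ΔT ε J 2 - Pmat m h ΔT ε 1) (U (n + 1) k))
    have h1 := hP (U (n + 1) (k + 1))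
    have h2 := hQ (U (n + 1) k)
    have hcoef : ((n:ℝ) + 1) * Sn ≤ ((n:ℝ) + 1) * Sn1 :=
      mul_le_mul_of_nonneg_left hmono (by positivity)
    push_cast
    push_cast at ih
    nlinarith
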